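/- Let a, b > 0 and define sequences by a₀ = a, b₀ = b, a_{n+1} = (a_n + b_n)/2, b_{n+1} = √(a_n b_n). Then both sequences converge to a common positive limit M = AGM(a,b), and π/(2M) = G(a,b). -/

import Mathlib

open MeasureTheory Filter Set

noncomputable def Gint (a b : ℝ) : ℝ :=
  ∫ θ in (0:ℝ)..(Real.pi / 2),
    1 / Real.sqrt (a ^ 2 * Real.cos θ ^ 2 + b ^ 2 * Real.sin θ ^ 2)

noncomputable def Jint (a b : ℝ) : ℝ :=
  ∫ t in Set.Ioi (0:ℝ), (Real.sqrt ((t ^ 2 + a ^ 2) * (t ^ 2 + b ^ 2)))⁻¹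

lemma form_pos {a b : ℝ} (ha : 0 < a) (hb : 0 < b) (θ : ℝ) :
    0 < a ^ 2 * Real.cos θ ^ 2 + b ^ 2 * Real.sin θ ^ 2 := by
  have h := Real.sin_sq_add_cos_sq θ
  have hs := sq_nonneg (Real.sin θ)
  have hc := sq_nonneg (Real.cos θ)
  rcases le_total a b with hab | hab
  · have h2 : a ^ 2 ≤ b ^ 2 := by nlinarith
    have h3 := mul_le_mul_of_nonneg_right h2 hs
    have h4 : a ^ 2 * Real.cos θ ^ 2 + a ^ 2 * Real.sin θ ^ 2 = a ^ 2 := by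
      linear_combination a ^ 2 * h
    nlinarith [pow_pos ha 2]
  · have h2 : b ^ 2 ≤ a ^ 2 := by nlinarith
    have h3 := mul_le_mul_of_nonneg_right h2 hc
    have h4 : b ^ 2 * Real.cos θ ^ 2 + b ^ 2 * Real.sin θ ^ 2 = b ^ 2 := by
      linear_combination b ^ 2 * h
    nlinarith [pow_pos hb 2]

lemma integrand_cont {a b : ℝ} (ha : 0 < a) (hb : 0 < b) :
    Continuous fun θ : ℝ =>
      1 / Real.sqrt (a ^ 2 * Real.cos θ ^ 2 + b ^ 2 * Real.sin θ ^ 2) := by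
  simp only [one_div]
  refine Continuous.inv₀ (by continuity) fun θ => ?_
  exact (Real.sqrt_pos.mpr (form_pos ha hb θ)).ne'

lemma Gint_bounds {a b : ℝ} (hb : 0 < b) (hba : b ≤ a) :
    Real.pi / (2 * a) ≤ Gint a b ∧ Gint a b ≤ Real.pi / (2 * b) := by
  have ha : 0 < a := hb.trans_le hba
  have hpi : (0:ℝ) ≤ Real.pi / 2 := by positivity
  have hint : IntervalIntegrable
      (fun θ : ℝ => 1 / Real.sqrt (a ^ 2 * Real.cos θ ^ 2 + b ^ 2 * Real.sin θ ^ 2))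
      volume 0 (Real.pi / 2) := (integrand_cont ha hb).intervalIntegrable _ _
  have key : ∀ θ : ℝ, 1 / a ≤ 1 / Real.sqrt (a ^ 2 * Real.cos θ ^ 2 + b ^ 2 * Real.sin θ ^ 2) ∧
      1 / Real.sqrt (a ^ 2 * Real.cos θ ^ 2 + b ^ 2 * Real.sin θ ^ 2) ≤ 1 / b := by
    intro θ
    have h := Real.sin_sq_add_cos_sq θ
    have hs2 := sq_nonneg (Real.sin θ)
    have hc2 := sq_nonneg (Real.cos θ)
    have hs := Real.sqrt_pos.mpr (form_pos ha hb θ)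
    have hb2 : b ^ 2 ≤ a ^ 2 := by nlinarith
    have h1 : Real.sqrt (a ^ 2 * Real.cos θ ^ 2 + b ^ 2 * Real.sin θ ^ 2) ≤ a :=
      calc Real.sqrt (a ^ 2 * Real.cos θ ^ 2 + b ^ 2 * Real.sin θ ^ 2)
          ≤ Real.sqrt (a ^ 2) := by
            apply Real.sqrt_le_sqrt
            have h3 := mul_le_mul_of_nonneg_right hb2 hs2
            have h4 : a ^ 2 * Real.cos θ ^ 2 + a ^ 2 * Real.sin θ ^ 2 = a ^ 2 := by
              linear_combination a ^ 2 * h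
            linarith
        _ = a := Real.sqrt_sq ha.le
    have h2 : b ≤ Real.sqrt (a ^ 2 * Real.cos θ ^ 2 + b ^ 2 * Real.sin θ ^ 2) :=
      calc b = Real.sqrt (b ^ 2) := (Real.sqrt_sq hb.le).symm
        _ ≤ Real.sqrt (a ^ 2 * Real.cos θ ^ 2 + b ^ 2 * Real.sin θ ^ 2) := by
            apply Real.sqrt_le_sqrt
            have h3 := mul_le_mul_of_nonneg_right hb2 hc2
            have h4 : b ^ 2 * Real.cos θ ^ 2 + b ^ 2 * Real.sin θ ^ 2 = b ^ 2 := by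
              linear_combination b ^ 2 * h
            linarith
    exact ⟨one_div_le_one_div_of_le hs h1, one_div_le_one_div_of_le hb h2⟩
  have hconst : ∀ c : ℝ, (∫ _ in (0:ℝ)..(Real.pi / 2), c) = Real.pi / 2 * c := by
    intro c; rw [intervalIntegral.integral_const]; simp [smul_eq_mul]
  constructor
  · have h := intervalIntegral.integral_mono_on hpi (intervalIntegrable_const (c := 1 / a)) hint
      (fun θ _ => (key θ).1)
    calc Real.pi / (2 * a) = ∫ _ in (0:ℝ)..(Real.pi / 2), 1 / a := by rw [hconst]; ring
      _ ≤ Gint a b := h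
  · have h := intervalIntegral.integral_mono_on hpi hint (intervalIntegrable_const (c := 1 / b))
      (fun θ _ => (key θ).2)
    calc Gint a b ≤ ∫ _ in (0:ℝ)..(Real.pi / 2), 1 / b := h
      _ = Real.pi / (2 * b) := by rw [hconst]; ring

lemma Gint_eq_Jint {a b : ℝ} (ha : 0 < a) (hb : 0 < b) : Gint a b = Jint a b := by
  have hpi2 : (0:ℝ) < Real.pi / 2 := by positivity
  set g : ℝ → ℝ := fun t => (Real.sqrt ((t ^ 2 + a ^ 2) * (t ^ 2 + b ^ 2)))⁻¹ with hg
  have himg : (fun θ => b * Real.tan θ) '' Ioo 0 (Real.pi / 2) = Ioi (0:ℝ) := by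
    ext y
    constructor
    · rintro ⟨θ, ⟨h0, h1⟩, rfl⟩
      exact mul_pos hb (Real.tan_pos_of_pos_of_lt_pi_div_two h0 h1)
    · intro hy
      have hy' : (0:ℝ) < y := hy
      refine ⟨Real.arctan (y / b), ⟨?_, Real.arctan_lt_pi_div_two _⟩, ?_⟩
      · have : Real.arctan 0 < Real.arctan (y / b) :=
          Real.arctan_strictMono (by positivity)
        simpa [Real.arctan_zero] using this
      · show b * Real.tan (Real.arctan (y / b)) = y
        rw [Real.tan_arctan]; field_simp
  have hsub : Ioo 0 (Real.pi / 2) ⊆ Ioo (-(Real.pi / 2)) (Real.pi / 2) := by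
    intro x hx; exact ⟨by linarith [hx.1], hx.2⟩
  have hinj : InjOn (fun θ => b * Real.tan θ) (Ioo 0 (Real.pi / 2)) := by
    intro x hx y hy hxy
    exact Real.injOn_tan (hsub hx) (hsub hy) (mul_left_cancel₀ hb.ne' hxy)
  have hderiv : ∀ θ ∈ Ioo 0 (Real.pi / 2),
      HasDerivWithinAt (fun θ => b * Real.tan θ) (b / Real.cos θ ^ 2) (Ioo 0 (Real.pi / 2)) θ := by
    intro θ hθ
    have hcos : Real.cos θ ≠ 0 := (Real.cos_pos_of_mem_Ioo (hsub hθ)).ne'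
    have := (Real.hasDerivAt_tan hcos).const_mul b
    simpa [div_eq_mul_inv, mul_comm, mul_assoc] using this.hasDerivWithinAt
  have hcov := integral_image_eq_integral_abs_deriv_smul measurableSet_Ioo hderiv hinj g
  rw [himg] at hcov
  have hpt : ∀ θ ∈ Ioo 0 (Real.pi / 2),
      |b / Real.cos θ ^ 2| • g (b * Real.tan θ)
        = 1 / Real.sqrt (a ^ 2 * Real.cos θ ^ 2 + b ^ 2 * Real.sin θ ^ 2) := by
    intro θ hθ
    have hcos : 0 < Real.cos θ := Real.cos_pos_of_mem_Ioo (hsub hθ)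
    have hformnn : (0:ℝ) ≤ a ^ 2 * Real.cos θ ^ 2 + b ^ 2 * Real.sin θ ^ 2 := by positivity
    have hformpos : (0:ℝ) < a ^ 2 * Real.cos θ ^ 2 + b ^ 2 * Real.sin θ ^ 2 := by positivity
    have hX : ((b * Real.tan θ) ^ 2 + a ^ 2) * ((b * Real.tan θ) ^ 2 + b ^ 2)
        = (b / Real.cos θ ^ 2
            * Real.sqrt (a ^ 2 * Real.cos θ ^ 2 + b ^ 2 * Real.sin θ ^ 2)) ^ 2 := by
      have hs2 : Real.sin θ ^ 2 = 1 - Real.cos θ ^ 2 := by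
        nlinarith [Real.sin_sq_add_cos_sq θ]
      rw [mul_pow, mul_pow, Real.sq_sqrt hformnn, Real.tan_eq_sin_div_cos, div_pow, hs2]
      field_simp
      ring
    have hcnn : (0:ℝ) ≤ b / Real.cos θ ^ 2
        * Real.sqrt (a ^ 2 * Real.cos θ ^ 2 + b ^ 2 * Real.sin θ ^ 2) := by positivity
    have hgval : g (b * Real.tan θ)
        = (b / Real.cos θ ^ 2
            * Real.sqrt (a ^ 2 * Real.cos θ ^ 2 + b ^ 2 * Real.sin θ ^ 2))⁻¹ := by
      rw [hg]; simp only []; rw [hX, Real.sqrt_sq hcnn]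
    rw [hgval, smul_eq_mul, abs_of_pos (by positivity), mul_inv]
    have hsq : Real.sqrt (a ^ 2 * Real.cos θ ^ 2 + b ^ 2 * Real.sin θ ^ 2) ≠ 0 :=
      (Real.sqrt_pos.mpr hformpos).ne'
    field_simp
  calc Gint a b
      = ∫ θ in Ioo 0 (Real.pi / 2),
          1 / Real.sqrt (a ^ 2 * Real.cos θ ^ 2 + b ^ 2 * Real.sin θ ^ 2) := by
        rw [Gint, intervalIntegral.integral_of_le hpi2.le, ← integral_Ioc_eq_integral_Ioo]
    _ = ∫ θ in Ioo 0 (Real.pi / 2), |b / Real.cos θ ^ 2| • g (b * Real.tan θ) :=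
        (setIntegral_congr_fun measurableSet_Ioo hpt).symm
    _ = ∫ t in Ioi (0:ℝ), g t := hcov.symm
    _ = Jint a b := rfl

lemma Jint_step {a b : ℝ} (ha : 0 < a) (hb : 0 < b) :
    Jint ((a + b) / 2) (Real.sqrt (a * b)) = Jint a b := by
  have hab : 0 < a * b := mul_pos ha hb
  set a1 : ℝ := (a + b) / 2 with ha1
  set b1 : ℝ := Real.sqrt (a * b) with hb1
  have hb1sq : b1 ^ 2 = a * b := Real.sq_sqrt hab.le
  set g1 : ℝ → ℝ := fun u => (Real.sqrt ((u ^ 2 + a1 ^ 2) * (u ^ 2 + b1 ^ 2)))⁻¹ with hg1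
  set f : ℝ → ℝ := fun t => (t - a * b / t) / 2 with hf
  -- even function trick
  have heven : ∀ u : ℝ, g1 |u| = g1 u := by
    intro u; simp only [hg1, sq_abs]
  have habs : (∫ u : ℝ, g1 u) = 2 * Jint a1 b1 := by
    rw [show (∫ u : ℝ, g1 u) = ∫ u : ℝ, g1 |u| from by simp only [heven]]
    rw [integral_comp_abs]
    rfl
  -- image of Ioi 0 under f is univ
  have himg : f '' Ioi 0 = univ := by
    refine eq_univ_of_forall fun u => ?_
    have hsq : (0:ℝ) ≤ u ^ 2 + a * b := by positivity
    set s : ℝ := Real.sqrt (u ^ 2 + a * b) with hs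
    have hs2 : s ^ 2 = u ^ 2 + a * b := Real.sq_sqrt hsq
    have hslt : |u| < s := by
      rw [hs, show |u| = Real.sqrt (u ^ 2) from (Real.sqrt_sq_eq_abs u).symm]
      exact Real.sqrt_lt_sqrt (sq_nonneg u) (by linarith)
    have htpos : 0 < u + s := by
      have := neg_abs_le u; linarith
    refine ⟨u + s, htpos, ?_⟩
    show (u + s - a * b / (u + s)) / 2 = u
    field_simp
    nlinarith [hs2]
  -- injectivity: f is strictly monotone on Ioi 0
  have hinj : InjOn f (Ioi 0) := by
    have : StrictMonoOn f (Ioi 0) := by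
      intro x hx y hy hxy
      have hx' : (0:ℝ) < x := hx
      have hy' : (0:ℝ) < y := hy
      have h1 : a * b / y < a * b / x := div_lt_div_of_pos_left hab hx' hxy
      show (x - a * b / x) / 2 < (y - a * b / y) / 2
      linarith
    exact this.injOn
  -- derivative
  set f' : ℝ → ℝ := fun t => (1 + a * b / t ^ 2) / 2 with hf'
  have hderiv : ∀ t ∈ Ioi (0:ℝ), HasDerivWithinAt f (f' t) (Ioi 0) t := by
    intro t ht
    have ht' : (0:ℝ) < t := ht
    have h1 : HasDerivAt (fun t : ℝ => (t - a * b * t⁻¹) / 2)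
        ((1 - a * b * (-(t ^ 2)⁻¹)) / 2) t :=
      (((hasDerivAt_id t).sub ((hasDerivAt_inv ht'.ne').const_mul (a * b)))).div_const 2
    have h2 : (1 - a * b * (-(t ^ 2)⁻¹)) / 2 = f' t := by
      rw [hf']; field_simp
      ring
    have h3 : (fun t : ℝ => (t - a * b * t⁻¹) / 2) = f := by
      funext x; rw [hf]; ring
    rw [h2, h3] at h1
    exact h1.hasDerivWithinAt
  have hcov := integral_image_eq_integral_abs_deriv_smul measurableSet_Ioi hderiv hinj g1
  rw [himg, setIntegral_univ] at hcov
  -- pointwise identity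
  have hpt : ∀ t ∈ Ioi (0:ℝ),
      |f' t| • g1 (f t) = 2 * (Real.sqrt ((t ^ 2 + a ^ 2) * (t ^ 2 + b ^ 2)))⁻¹ := by
    intro t ht
    have ht' : (0:ℝ) < t := ht
    have hPnn : (0:ℝ) ≤ (t ^ 2 + a ^ 2) * (t ^ 2 + b ^ 2) := by positivity
    have hPpos : (0:ℝ) < (t ^ 2 + a ^ 2) * (t ^ 2 + b ^ 2) := by positivity
    set sP : ℝ := Real.sqrt ((t ^ 2 + a ^ 2) * (t ^ 2 + b ^ 2)) with hsPdef
    have hsq : sP ^ 2 = (t ^ 2 + a ^ 2) * (t ^ 2 + b ^ 2) := Real.sq_sqrt hPnn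
    have hsP : 0 < sP := Real.sqrt_pos.mpr hPpos
    set c : ℝ := sP * (t ^ 2 + a * b) / (4 * t ^ 2) with hc
    have hcpos : 0 < c := by rw [hc]; positivity
    have hc2 : c ^ 2 = (t ^ 2 + a ^ 2) * (t ^ 2 + b ^ 2) * (t ^ 2 + a * b) ^ 2
        / (16 * t ^ 4) := by
      rw [hc, div_pow, mul_pow, hsq]; ring
    have hX : ((f t) ^ 2 + a1 ^ 2) * ((f t) ^ 2 + b1 ^ 2) = c ^ 2 := by
      rw [hc2, hf, ha1, hb1sq]
      simp only []
      field_simp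
      ring
    have hgval : g1 (f t) = c⁻¹ := by
      rw [hg1]; simp only []; rw [hX, Real.sqrt_sq hcpos.le]
    have hf'pos : 0 < f' t := by rw [hf']; positivity
    rw [hgval, smul_eq_mul, abs_of_pos hf'pos, hf', hc]
    simp only []
    have htab : (0:ℝ) < t ^ 2 + a * b := by positivity
    field_simp
    ring
  have h2 : (∫ t in Ioi (0:ℝ), |f' t| • g1 (f t))
      = 2 * Jint a b := by
    rw [setIntegral_congr_fun measurableSet_Ioi hpt, Jint]
    exact integral_const_mul 2 _
  rw [h2] at hcov
  rw [habs] at hcov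
  linarith


lemma Gint_step {a b : ℝ} (ha : 0 < a) (hb : 0 < b) :
    Gint ((a + b) / 2) (Real.sqrt (a * b)) = Gint a b := by
  rw [Gint_eq_Jint (by linarith : (0:ℝ) < (a + b) / 2)
      (Real.sqrt_pos.mpr (mul_pos ha hb)), Gint_eq_Jint ha hb, Jint_step ha hb]

lemma sqrt_le_avg {x y : ℝ} (hx : 0 ≤ x) (hy : 0 ≤ y) :
    Real.sqrt (x * y) ≤ (x + y) / 2 := by
  rw [Real.sqrt_mul hx]
  nlinarith [sq_nonneg (Real.sqrt x - Real.sqrt y), Real.sq_sqrt hx, Real.sq_sqrt hy,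
    Real.sqrt_nonneg x, Real.sqrt_nonneg y]

theorem agm_and_elliptic_integral (a b : ℝ) (ha : 0 < a) (hb : 0 < b)
    (A B : ℕ → ℝ) (hA0 : A 0 = a) (hB0 : B 0 = b)
    (hA : ∀ n, A (n + 1) = (A n + B n) / 2)
    (hB : ∀ n, B (n + 1) = Real.sqrt (A n * B n)) :
    ∃ M : ℝ, 0 < M ∧
      Tendsto A atTop (nhds M) ∧ Tendsto B atTop (nhds M) ∧
      Real.pi / (2 * M)
        = ∫ θ in (0:ℝ)..(Real.pi / 2),
            1 / Real.sqrt (a ^ 2 * Real.cos θ ^ 2 + b ^ 2 * Real.sin θ ^ 2) := by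
  -- positivity
  have hpos : ∀ n, 0 < A n ∧ 0 < B n := by
    intro n
    induction n with
    | zero => exact ⟨hA0 ▸ ha, hB0 ▸ hb⟩
    | succ n ih =>
      refine ⟨?_, ?_⟩
      · rw [hA]; linarith [ih.1, ih.2]
      · rw [hB]; exact Real.sqrt_pos.mpr (mul_pos ih.1 ih.2)
  -- b ≤ a from step 1 on
  have hBA : ∀ n, B (n + 1) ≤ A (n + 1) := by
    intro n
    rw [hA, hB]
    exact sqrt_le_avg (hpos n).1.le (hpos n).2.le
  -- monotonicity (shifted sequences)
  set A' : ℕ → ℝ := fun n => A (n + 1) with hA'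
  set B' : ℕ → ℝ := fun n => B (n + 1) with hB'
  have hA'anti : Antitone A' := by
    apply antitone_nat_of_succ_le
    intro n
    show A (n + 2) ≤ A (n + 1)
    rw [hA (n + 1)]
    linarith [hBA n]
  have hB'mono : Monotone B' := by
    apply monotone_nat_of_le_succ
    intro n
    show B (n + 1) ≤ B (n + 2)
    rw [hB (n + 1)]
    calc B (n + 1) = Real.sqrt (B (n + 1) * B (n + 1)) := by
          rw [Real.sqrt_mul_self (hpos (n + 1)).2.le]
      _ ≤ Real.sqrt (A (n + 1) * B (n + 1)) := by
          apply Real.sqrt_le_sqrt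
          exact mul_le_mul_of_nonneg_right (hBA n) (hpos (n + 1)).2.le
  have hB'leA' : ∀ n, B' n ≤ A' n := fun n => hBA n
  have hB'0le : ∀ n, B' 0 ≤ A' n := fun n => (hB'mono (Nat.zero_le n)).trans (hB'leA' n)
  have hA'le : ∀ n, B' n ≤ A' 0 := fun n => (hB'leA' n).trans (hA'anti (Nat.zero_le n))
  -- convergence
  have hAbdd : BddBelow (range A') := ⟨B' 0, by rintro _ ⟨n, rfl⟩; exact hB'0le n⟩
  have hBbdd : BddAbove (range B') := ⟨A' 0, by rintro _ ⟨n, rfl⟩; exact hA'le n⟩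
  set M : ℝ := ⨅ n, A' n with hM
  set M' : ℝ := ⨆ n, B' n with hM'
  have hMA : Tendsto A' atTop (nhds M) := tendsto_atTop_ciInf hA'anti hAbdd
  have hMB : Tendsto B' atTop (nhds M') := tendsto_atTop_ciSup hB'mono hBbdd
  -- equal limits
  have hMM' : M = M' := by
    have h1 : Tendsto (fun n => A' (n + 1)) atTop (nhds M) :=
      hMA.comp (tendsto_add_atTop_nat 1)
    have h2 : Tendsto (fun n => (A' n + B' n) / 2) atTop (nhds ((M + M') / 2)) :=
      (hMA.add hMB).div_const 2
    have h3 : (fun n => A' (n + 1)) = fun n => (A' n + B' n) / 2 := by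
      funext n; exact hA (n + 1)
    rw [h3] at h1
    have := tendsto_nhds_unique h1 h2
    linarith
  -- positivity of M
  have hB'0pos : 0 < B' 0 := (hpos 1).2
  have hMpos : 0 < M := by
    have : B' 0 ≤ M := le_ciInf hB'0le
    linarith
  -- limits of original sequences
  have hTendA : Tendsto A atTop (nhds M) := by
    rw [← tendsto_add_atTop_iff_nat 1]; exact hMA
  have hTendB : Tendsto B atTop (nhds M) := by
    rw [← tendsto_add_atTop_iff_nat 1]; rw [hMM']; exact hMB
  -- invariance of the integral
  have hGinv : ∀ n, Gint (A n) (B n) = Gint a b := by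
    intro n
    induction n with
    | zero => rw [hA0, hB0]
    | succ n ih =>
      rw [hA, hB, Gint_step (hpos n).1 (hpos n).2]
      exact ih
  -- squeeze
  have hLB : ∀ n, Real.pi / (2 * A' n) ≤ Gint a b := by
    intro n
    have h := (Gint_bounds (hpos (n + 1)).2 (hBA n)).1
    rwa [hGinv (n + 1)] at h
  have hUB : ∀ n, Gint a b ≤ Real.pi / (2 * B' n) := by
    intro n
    have h := (Gint_bounds (hpos (n + 1)).2 (hBA n)).2
    rwa [hGinv (n + 1)] at h
  have hlim1 : Tendsto (fun n => Real.pi / (2 * A' n)) atTop (nhds (Real.pi / (2 * M))) :=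
    tendsto_const_nhds.div (hMA.const_mul 2) (by positivity)
  have hlim2 : Tendsto (fun n => Real.pi / (2 * B' n)) atTop (nhds (Real.pi / (2 * M))) := by
    rw [hMM']
    exact tendsto_const_nhds.div (hMB.const_mul 2) (by rw [← hMM']; positivity)
  have hle1 : Real.pi / (2 * M) ≤ Gint a b :=
    le_of_tendsto hlim1 (Eventually.of_forall hLB)
  have hle2 : Gint a b ≤ Real.pi / (2 * M) :=
    ge_of_tendsto hlim2 (Eventually.of_forall hUB)
  exact ⟨M, hMpos, hTendA, hTendB, (le_antisymm hle1 hle2).symm ▸ rfl⟩
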